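/- The trace operator on partial measurable functions is well-defined: for any partial measurable function f : X + Z → Y + Z, the partial function tr(f) : X → Y, defined by tr(f)(x) = y iff either f(inl x) = inl y, or there exists a finite sequence z₁,…,zₙ ∈ Z with f(inl x) = inr z₁, f(inr zᵢ) = inr z_{i+1} for all i < n, and f(inr zₙ) = inl y, is a partial measurable function from X to Y. -/
import Mathlib


/-- A partial function `f : X →. Y` is partial measurable when, for every measurable
set `A ⊆ Y`, the set of points where `f` is defined with value in `A` is measurable. -/
def PartialMeasurable {X Y : Type*} [MeasurableSpace X] [MeasurableSpace Y]
    (f : X →. Y) : Prop :=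
  ∀ A : Set Y, MeasurableSet A → MeasurableSet {x | ∃ y ∈ f x, y ∈ A}

/-- The trace relation of `f : X + Z →. Y + Z`: `TraceRel f x y` holds iff
`f (inl x) = inl y`, or there is a finite sequence `z₀, …, zₙ` in `Z` with
`f (inl x) = inr z₀`, `f (inr zᵢ) = inr zᵢ₊₁` for all `i < n`, and
`f (inr zₙ) = inl y`. -/
def TraceRel {X Y Z : Type*} (f : (X ⊕ Z) →. (Y ⊕ Z)) (x : X) (y : Y) : Prop :=
  Sum.inl y ∈ f (Sum.inl x) ∨
    ∃ (n : ℕ) (z : Fin (n + 1) → Z),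
      Sum.inr (z 0) ∈ f (Sum.inl x) ∧
      (∀ i : Fin n, Sum.inr (z i.succ) ∈ f (Sum.inr (z i.castSucc))) ∧
      Sum.inl y ∈ f (Sum.inr (z (Fin.last n)))

/-- `t` is a trace of `f` when the graph of `t` is exactly the trace relation of `f`. -/
def IsTrace {X Y Z : Type*} (f : (X ⊕ Z) →. (Y ⊕ Z)) (t : X →. Y) : Prop :=
  ∀ x y, y ∈ t x ↔ TraceRel f x y

/-- The trace of a partial measurable function exists as a partial function and is
partial measurable. -/
private def Reach {X Y Z : Type*} (f : (X ⊕ Z) →. (Y ⊕ Z)) (A : Set Y) : ℕ → Z → Prop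
  | 0, z => ∃ y ∈ A, Sum.inl y ∈ f (Sum.inr z)
  | n+1, z => ∃ w, Sum.inr w ∈ f (Sum.inr z) ∧ Reach f A n w

private lemma chain_unique {X Y Z : Type*} (f : (X ⊕ Z) →. (Y ⊕ Z)) :
    ∀ n n' (z : Fin (n+1) → Z) (z' : Fin (n'+1) → Z) (y y' : Y),
      z 0 = z' 0 →
      (∀ i : Fin n, Sum.inr (z i.succ) ∈ f (Sum.inr (z i.castSucc))) →
      Sum.inl y ∈ f (Sum.inr (z (Fin.last n))) →
      (∀ i : Fin n', Sum.inr (z' i.succ) ∈ f (Sum.inr (z' i.castSucc))) →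
      Sum.inl y' ∈ f (Sum.inr (z' (Fin.last n'))) → y = y' := by
  intro n
  induction n with
  | zero =>
    intro n' z z' y y' h0 hc hl hc' hl'
    rw [Fin.last_zero, h0] at hl
    cases n' with
    | zero =>
      rw [Fin.last_zero] at hl'
      exact Sum.inl.inj (Part.mem_unique hl hl')
    | succ m =>
      have := hc' 0
      rw [Fin.castSucc_zero] at this
      exact absurd (Part.mem_unique hl this) (by simp)
  | succ m ih =>
    intro n' z z' y y' h0 hc hl hc' hl'
    cases n' with
    | zero =>
      have := hc 0
      rw [Fin.castSucc_zero, h0] at this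
      rw [Fin.last_zero] at hl'
      exact absurd (Part.mem_unique hl' this) (by simp)
    | succ m' =>
      have s1 := hc 0
      have s2 := hc' 0
      rw [Fin.castSucc_zero] at s1 s2
      rw [h0] at s1
      have h1 : z (Fin.succ 0) = z' (Fin.succ 0) :=
        Sum.inr.inj (Part.mem_unique s1 s2)
      refine ih m' (fun i => z i.succ) (fun i => z' i.succ) y y' h1 ?_ ?_ ?_ ?_
      · intro i
        show Sum.inr (z i.succ.succ) ∈ f (Sum.inr (z i.castSucc.succ))
        rw [Fin.succ_castSucc]; exact hc i.succ
      · show Sum.inl y ∈ f (Sum.inr (z (Fin.last m).succ))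
        rw [Fin.succ_last]; exact hl
      · intro i
        show Sum.inr (z' i.succ.succ) ∈ f (Sum.inr (z' i.castSucc.succ))
        rw [Fin.succ_castSucc]; exact hc' i.succ
      · show Sum.inl y' ∈ f (Sum.inr (z' (Fin.last m').succ))
        rw [Fin.succ_last]; exact hl'

private lemma traceRel_unique {X Y Z : Type*} (f : (X ⊕ Z) →. (Y ⊕ Z)) {x : X} {y y' : Y}
    (h : TraceRel f x y) (h' : TraceRel f x y') : y = y' := by
  rcases h with h | ⟨n, z, hz0, hc, hl⟩
  · rcases h' with h' | ⟨n', z', hz0', hc', hl'⟩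
    · exact Sum.inl.inj (Part.mem_unique h h')
    · exact absurd (Part.mem_unique h hz0') (by simp)
  · rcases h' with h' | ⟨n', z', hz0', hc', hl'⟩
    · exact absurd (Part.mem_unique h' hz0) (by simp)
    · exact chain_unique f n n' z z' y y' (Sum.inr.inj (Part.mem_unique hz0 hz0')) hc hl hc' hl'

private lemma chain_reach {X Y Z : Type*} (f : (X ⊕ Z) →. (Y ⊕ Z)) (A : Set Y) :
    ∀ n (z : Fin (n+1) → Z) (y : Y), y ∈ A →
      (∀ i : Fin n, Sum.inr (z i.succ) ∈ f (Sum.inr (z i.castSucc))) →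
      Sum.inl y ∈ f (Sum.inr (z (Fin.last n))) → Reach f A n (z 0) := by
  intro n
  induction n with
  | zero =>
    intro z y hy hc hl
    rw [Fin.last_zero] at hl
    exact ⟨y, hy, hl⟩
  | succ m ih =>
    intro z y hy hc hl
    have s0 := hc 0
    rw [Fin.castSucc_zero] at s0
    refine ⟨z (Fin.succ 0), s0, ?_⟩
    refine ih (fun i => z i.succ) y hy ?_ ?_
    · intro i
      show Sum.inr (z i.succ.succ) ∈ f (Sum.inr (z i.castSucc.succ))
      rw [Fin.succ_castSucc]; exact hc i.succ
    · show Sum.inl y ∈ f (Sum.inr (z (Fin.last m).succ))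
      rw [Fin.succ_last]; exact hl

private lemma reach_chain {X Y Z : Type*} (f : (X ⊕ Z) →. (Y ⊕ Z)) (A : Set Y) :
    ∀ n (z : Z), Reach f A n z →
      ∃ (y : Y) (w : Fin (n+1) → Z), y ∈ A ∧ w 0 = z ∧
        (∀ i : Fin n, Sum.inr (w i.succ) ∈ f (Sum.inr (w i.castSucc))) ∧
        Sum.inl y ∈ f (Sum.inr (w (Fin.last n))) := by
  intro n
  induction n with
  | zero =>
    rintro z ⟨y, hy, hl⟩
    exact ⟨y, fun _ => z, hy, rfl, fun i => i.elim0, by rw [Fin.last_zero]; exact hl⟩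
  | succ m ih =>
    rintro z ⟨w0, hs, hr⟩
    obtain ⟨y, v, hy, hv0, hvc, hvl⟩ := ih w0 hr
    refine ⟨y, Fin.cons z v, hy, rfl, ?_, ?_⟩
    · intro i
      refine i.cases ?_ ?_
      · rw [Fin.castSucc_zero]
        simpa [hv0] using hs
      · intro j
        rw [← Fin.succ_castSucc]
        simpa using hvc j
    · rw [← Fin.succ_last]
      simpa using hvl

private lemma reach_measurable {X Y Z : Type*} [MeasurableSpace X] [MeasurableSpace Y]
    [MeasurableSpace Z] (f : (X ⊕ Z) →. (Y ⊕ Z)) (hf : PartialMeasurable f)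
    (A : Set Y) (hA : MeasurableSet A) :
    ∀ n, MeasurableSet {z | Reach f A n z} := by
  intro n
  induction n with
  | zero =>
    have he : {z | Reach f A 0 z}
        = Sum.inr ⁻¹' {w | ∃ v ∈ f w, v ∈ Sum.inl '' A} := by
      ext z
      simp only [Reach, Set.mem_setOf_eq, Set.mem_preimage, Set.mem_image]
      constructor
      · rintro ⟨y, hyA, hy⟩; exact ⟨Sum.inl y, hy, y, hyA, rfl⟩
      · rintro ⟨v, hv, y, hyA, rfl⟩; exact ⟨y, hyA, hv⟩
    rw [he]
    exact measurable_inr (hf _ hA.inl_image)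
  | succ m ih =>
    have he : {z | Reach f A (m+1) z}
        = Sum.inr ⁻¹' {w | ∃ v ∈ f w, v ∈ Sum.inr '' {z | Reach f A m z}} := by
      ext z
      simp only [Reach, Set.mem_setOf_eq, Set.mem_preimage, Set.mem_image]
      constructor
      · rintro ⟨w, hw, hr⟩; exact ⟨Sum.inr w, hw, w, hr, rfl⟩
      · rintro ⟨v, hv, w, hr, rfl⟩; exact ⟨w, hv, hr⟩
    rw [he]
    exact measurable_inr (hf _ ih.inr_image)

theorem partialMeasurable_trace
    {X Y Z : Type*} [MeasurableSpace X] [MeasurableSpace Y] [MeasurableSpace Z]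
    (f : (X ⊕ Z) →. (Y ⊕ Z)) (hf : PartialMeasurable f) :
    ∃ t : X →. Y, IsTrace f t ∧ PartialMeasurable t := by
  classical
  set t : X →. Y := fun x => ⟨∃ y, TraceRel f x y, fun h => Classical.choose h⟩ with ht
  have htr : IsTrace f t := by
    intro x y
    constructor
    · rintro ⟨h, rfl⟩
      exact Classical.choose_spec h
    · intro hy
      exact ⟨⟨y, hy⟩, traceRel_unique f (Classical.choose_spec ⟨y, hy⟩) hy⟩
  refine ⟨t, htr, ?_⟩
  intro A hA
  have hset : {x | ∃ y ∈ t x, y ∈ A}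
      = (Sum.inl ⁻¹' {w | ∃ v ∈ f w, v ∈ Sum.inl '' A}) ∪
        ⋃ n, Sum.inl ⁻¹' {w | ∃ v ∈ f w, v ∈ Sum.inr '' {z | Reach f A n z}} := by
    ext x
    simp only [Set.mem_setOf_eq, Set.mem_union, Set.mem_preimage, Set.mem_iUnion,
      Set.mem_image]
    constructor
    · rintro ⟨y, hyt, hyA⟩
      rcases (htr x y).1 hyt with h | ⟨n, z, hz0, hc, hl⟩
      · exact Or.inl ⟨Sum.inl y, h, y, hyA, rfl⟩
      · exact Or.inr ⟨n, Sum.inr (z 0), hz0, z 0, chain_reach f A n z y hyA hc hl, rfl⟩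
    · rintro (⟨v, hv, y, hyA, rfl⟩ | ⟨n, v, hv, z0, hz0, rfl⟩)
      · exact ⟨y, (htr x y).2 (Or.inl hv), hyA⟩
      · obtain ⟨y, w, hyA, hw0, hwc, hwl⟩ := reach_chain f A n z0 hz0
        refine ⟨y, (htr x y).2 (Or.inr ⟨n, w, ?_, hwc, hwl⟩), hyA⟩
        rw [hw0]; exact hv
  rw [hset]
  exact (measurable_inl (hf _ hA.inl_image)).union
    (MeasurableSet.iUnion fun n =>
      measurable_inl (hf _ ((reach_measurable f hf A hA n).inr_image)))
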